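/- For a distribution of the form P = (1-ε, q_1 ε, q_2 ε, ..., q_{n-1} ε) on n symbols, where Q = (q_1,...,q_{n-1}) is a probability distribution and 0 < ε < 1, the AUH redundancy satisfies R(P) = 1 - h(ε) + ε·R(Q), where h is the binary entropy function, L and H are computed with anti-uniform lengths on n and n-1 symbols respectively. -/
import Mathlib


open Finset

/-- Average length of the anti-uniform code on `m` symbols. -/
noncomputable def avgLen (m : ℕ) (p : ℕ → ℝ) : ℝ :=
  ∑ i ∈ Finset.Icc 1 (m - 1), (i : ℝ) * p i + ((m : ℝ) - 1) * p m

/-- Entropy (base 2) of a distribution on symbols `1,…,m`. -/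
noncomputable def entropy (m : ℕ) (p : ℕ → ℝ) : ℝ :=
  -∑ i ∈ Finset.Icc 1 m, p i * Real.logb 2 (p i)

/-- Redundancy `R = L - H` of the anti-uniform code on `m` symbols. -/
noncomputable def redundancy (m : ℕ) (p : ℕ → ℝ) : ℝ :=
  avgLen m p - entropy m p

/-- Binary entropy function (base 2). -/
noncomputable def binEnt (x : ℝ) : ℝ :=
  -x * Real.logb 2 x - (1 - x) * Real.logb 2 (1 - x)


lemma sum_shift' (k : ℕ) (f : ℕ → ℝ) :
    ∑ i ∈ Icc 2 (k + 2), f i = ∑ i ∈ Icc 1 (k + 1), f (i + 1) := by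
  rw [show (2:ℕ) = 1 + 1 from rfl, show k + 2 = (k+1) + 1 from rfl,
    ← Finset.map_add_right_Icc 1 (k+1) 1, Finset.sum_map]
  rfl

lemma sum_Icc_one_eq' (k : ℕ) (f : ℕ → ℝ) :
    ∑ i ∈ Icc 1 (k + 2), f i = f 1 + ∑ i ∈ Icc 2 (k + 2), f i := by
  rw [← Finset.sum_insert (by simp : (1:ℕ) ∉ Icc 2 (k+2))]
  congr 1
  ext x
  simp only [Finset.mem_Icc, Finset.mem_insert]
  omega

/-- For `P = (1 - ε, q 1 · ε, …, q (n-1) · ε)` built from a probability distribution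
`Q` on `n - 1` symbols, the anti-uniform redundancy satisfies
`R(P) = 1 - h(ε) + ε R(Q)`. -/
theorem redundancy_split (n : ℕ) (hn : 3 ≤ n) (q : ℕ → ℝ) (ε : ℝ)
    (hε0 : 0 < ε) (hε1 : ε < 1)
    (hq0 : ∀ i ∈ Finset.Icc 1 (n - 1), 0 ≤ q i)
    (hq1 : ∑ i ∈ Finset.Icc 1 (n - 1), q i = 1) :
    redundancy n (fun i => if i = 1 then 1 - ε else q (i - 1) * ε) =
      1 - binEnt ε + ε * redundancy (n - 1) q := by
  obtain ⟨m, rfl⟩ : ∃ m, n = m + 3 := ⟨n - 3, by omega⟩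
  have h1 : m + 3 - 1 = m + 2 := rfl
  rw [h1] at hq0 hq1
  set P : ℕ → ℝ := fun i => if i = 1 then 1 - ε else q (i - 1) * ε with hP
  -- average length of P
  have hL : ∑ i ∈ Icc 1 (m + 2), (i : ℝ) * P i
      = (1 - ε) + ε * (∑ j ∈ Icc 1 (m + 1), (j : ℝ) * q j)
        + ε * (∑ j ∈ Icc 1 (m + 1), q j) := by
    rw [sum_Icc_one_eq', sum_shift']
    have : ∀ j ∈ Icc 1 (m + 1), ((j + 1 : ℕ) : ℝ) * P (j + 1)
        = ε * ((j : ℝ) * q j) + ε * q j := by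
      intro j hj
      simp only [Finset.mem_Icc] at hj
      simp only [hP, if_neg (by omega : ¬ j + 1 = 1), Nat.add_sub_cancel]
      push_cast
      ring
    rw [Finset.sum_congr rfl this, Finset.sum_add_distrib, ← Finset.mul_sum, ← Finset.mul_sum]
    simp only [hP, if_pos rfl]
    ring
  -- entropy of P
  have hlog : ∀ x : ℝ, 0 ≤ x → (x * ε) * Real.logb 2 (x * ε)
      = ε * (x * Real.logb 2 x) + x * (ε * Real.logb 2 ε) := by
    intro x hx
    rcases eq_or_lt_of_le hx with h | h
    · simp [← h]
    · rw [Real.logb_mul h.ne' hε0.ne']; ring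
  have hH : ∑ i ∈ Icc 1 (m + 3), P i * Real.logb 2 (P i)
      = (1 - ε) * Real.logb 2 (1 - ε) + ε * Real.logb 2 ε
        + ε * ∑ j ∈ Icc 1 (m + 2), q j * Real.logb 2 (q j) := by
    rw [show m + 3 = (m + 1) + 2 from rfl, sum_Icc_one_eq', sum_shift']
    have : ∀ j ∈ Icc 1 (m + 2), P (j + 1) * Real.logb 2 (P (j + 1))
        = ε * (q j * Real.logb 2 (q j)) + q j * (ε * Real.logb 2 ε) := by
      intro j hj
      have hj' : ¬ j + 1 = 1 := by simp only [Finset.mem_Icc] at hj; omega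
      simp only [hP, if_neg hj', Nat.add_sub_cancel]
      exact hlog (q j) (hq0 j hj)
    rw [Finset.sum_congr rfl this, Finset.sum_add_distrib, ← Finset.mul_sum, ← Finset.sum_mul, hq1]
    simp [hP]
    ring
  have hsplit : ∑ j ∈ Icc 1 (m + 1), q j = 1 - q (m + 2) := by
    rw [show m + 2 = (m + 1) + 1 from rfl, Finset.sum_Icc_succ_top (by omega)] at hq1
    linarith
  simp only [redundancy, avgLen, entropy, binEnt, h1,
    show m + 3 - 1 = m + 2 from rfl, show m + 2 - 1 = m + 1 from rfl]
  rw [hL, hH]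
  have hPn : P (m + 3) = q (m + 2) * ε := by simp [hP]
  rw [hPn]
  push_cast
  linear_combination ε * hsplit
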